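/- Let ε′ > 0 and ε = 2ε′². Let K ≥ 1, let w₁, …, w_K be positive reals summing to 1, let μ₁, …, μ_K ∈ ℝ and σ₁, …, σ_K > 0, and set α_k = N(μ_k, σ_k²), μ̄ = Σ_k w_k μ_k, and σ̄ = Σ_k w_k σ_k². If ε′² ≥ σ̄, then the Dirac measure δ_{μ̄} at μ̄ minimizes the functional α ↦ Σ_{k=1}^K w_k OT_ε(α_k, α) over all sub-Gaussian probability measures α on ℝ. -/

import Mathlib

open MeasureTheory ProbabilityTheory
open scoped ENNReal Classical

/-- Kullback–Leibler divergence `KL(π ‖ ρ)`, valued in `EReal`: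
`∫ log (dπ/dρ) dπ` when `π ≪ ρ` and the log-likelihood ratio is `π`-integrable,
and `⊤` otherwise. -/
noncomputable def KLdiv {X : Type*} [MeasurableSpace X] (π ρ : Measure X) : EReal :=
  if π ≪ ρ ∧ Integrable (fun x => Real.log (π.rnDeriv ρ x).toReal) π
  then ((∫ x, Real.log (π.rnDeriv ρ x).toReal ∂π : ℝ) : EReal)
  else ⊤

/-- Entropic optimal transport cost on `ℝ` with quadratic cost and product reference
measure: `OT_ε(α, β) = inf { ∫ (x-y)² dπ + ε KL(π ‖ α ⊗ β) }` over couplings `π`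
of `α` and `β`. -/
noncomputable def OTe (ε : ℝ) (α β : Measure ℝ) : EReal :=
  ⨅ (π : Measure (ℝ × ℝ)) (_ : IsProbabilityMeasure π)
    (_ : π.fst = α) (_ : π.snd = β),
    (((∫⁻ p, ENNReal.ofReal ((p.1 - p.2) ^ 2) ∂π : ℝ≥0∞) : EReal)
      + (ε : EReal) * KLdiv π (α.prod β))

/-- Sinkhorn divergence `S_ε(α,β) = OT_ε(α,β) − ½ OT_ε(α,α) − ½ OT_ε(β,β)`. -/
noncomputable def Sdiv (ε : ℝ) (α β : Measure ℝ) : EReal :=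
  OTe ε α β - ((1 / 2 : ℝ) : EReal) * OTe ε α α - ((1 / 2 : ℝ) : EReal) * OTe ε β β

/-- A probability measure on `ℝ` is sub-Gaussian if `∫ exp (x²/q) dα < ∞` for some `q > 0`. -/
def SubGaussian (α : Measure ℝ) : Prop :=
  ∃ q : ℝ, 0 < q ∧ ∫⁻ x, ENNReal.ofReal (Real.exp (x ^ 2 / q)) ∂α < ⊤

/-! ### Auxiliary lemmas -/

section Aux

open Real
open scoped NNReal

lemma my_abs_le_one_add_sq (y : ℝ) : |y| ≤ 1 + y ^ 2 := by
  nlinarith [sq_abs y, sq_nonneg (|y| - 1), abs_nonneg y]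

lemma my_sq_le_exp_add_exp (y : ℝ) : y ^ 2 ≤ 4 * Real.exp y + 4 * Real.exp (-y) := by
  have h1 : (1 + |y|/2) ≤ Real.exp (|y|/2) := by
    have := Real.add_one_le_exp (|y|/2); linarith
  have h2 : Real.exp |y| = Real.exp (|y|/2) * Real.exp (|y|/2) := by
    rw [← Real.exp_add]; ring_nf
  have h3 : Real.exp |y| ≤ Real.exp y + Real.exp (-y) := by
    rcases abs_cases y with ⟨h, _⟩ | ⟨h, _⟩
    · rw [h]; nlinarith [Real.exp_nonneg (-y)]
    · rw [h]; nlinarith [Real.exp_nonneg y]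
  have h0 : 0 ≤ |y| := abs_nonneg y
  nlinarith [sq_abs y]

lemma young_ineq (r g : ℝ) (hr : 0 ≤ r) :
    r * g ≤ r * Real.log r - r + Real.exp g := by
  rcases eq_or_lt_of_le hr with h | h
  · simp [← h]
    positivity
  · have h1 : (g - Real.log r) + 1 ≤ Real.exp (g - Real.log r) := Real.add_one_le_exp _
    have h2 : Real.exp (g - Real.log r) = Real.exp g / r := by
      rw [Real.exp_sub, Real.exp_log h]
    have h3 : r * ((g - Real.log r) + 1) ≤ r * (Real.exp g / r) := by
      rw [← h2]; exact mul_le_mul_of_nonneg_left h1 hr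
    have h4 : r * (Real.exp g / r) = Real.exp g := by field_simp
    nlinarith

variable {μ0 : ℝ} {v : ℝ≥0}

lemma gaussianPDF_eq_coe_toNNReal (μ0 : ℝ) (v : ℝ≥0) :
    gaussianPDF μ0 v = fun x => ((Real.toNNReal (gaussianPDFReal μ0 v x) : ℝ≥0) : ℝ≥0∞) := rfl

lemma my_integral_gaussianReal (hv : v ≠ 0) (f : ℝ → ℝ) :
    ∫ x, f x ∂(gaussianReal μ0 v) = ∫ x, gaussianPDFReal μ0 v x * f x := by
  rw [gaussianReal_of_var_ne_zero _ hv, gaussianPDF_eq_coe_toNNReal,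
    integral_withDensity_eq_integral_smul ((measurable_gaussianPDFReal μ0 v).real_toNNReal)]
  refine integral_congr_ae (ae_of_all _ fun x => ?_)
  simp [NNReal.smul_def, Real.coe_toNNReal _ (gaussianPDFReal_nonneg μ0 v x)]

lemma my_integrable_gaussianReal_iff (hv : v ≠ 0) (f : ℝ → ℝ) :
    Integrable f (gaussianReal μ0 v) ↔
      Integrable (fun x => gaussianPDFReal μ0 v x * f x) volume := by
  rw [gaussianReal_of_var_ne_zero _ hv, gaussianPDF_eq_coe_toNNReal,
    integrable_withDensity_iff_integrable_smul ((measurable_gaussianPDFReal μ0 v).real_toNNReal)]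
  constructor <;> intro h <;> refine h.congr (ae_of_all _ fun x => ?_) <;>
    simp [NNReal.smul_def, Real.coe_toNNReal _ (gaussianPDFReal_nonneg μ0 v x)]

lemma gaussianPDFReal_mul_exp (hv : v ≠ 0) (t x : ℝ) :
    gaussianPDFReal μ0 v x * Real.exp (t * x)
      = Real.exp (t * μ0 + v * t ^ 2 / 2) * gaussianPDFReal (μ0 + v * t) v x := by
  have hv' : (v : ℝ) ≠ 0 := by exact_mod_cast hv
  simp only [gaussianPDFReal]
  rw [mul_assoc, ← Real.exp_add]
  conv_rhs => rw [mul_comm, mul_assoc, ← Real.exp_add]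
  congr 1
  field_simp
  ring

lemma my_integrable_exp_gaussianReal (hv : v ≠ 0) (t : ℝ) :
    Integrable (fun x => Real.exp (t * x)) (gaussianReal μ0 v) := by
  rw [my_integrable_gaussianReal_iff hv]
  have : (fun x => gaussianPDFReal μ0 v x * Real.exp (t * x))
      = fun x => Real.exp (t * μ0 + v * t ^ 2 / 2) * gaussianPDFReal (μ0 + v * t) v x := by
    funext x; exact gaussianPDFReal_mul_exp hv t x
  rw [this]
  exact (integrable_gaussianPDFReal _ _).const_mul _

lemma my_integral_exp_gaussianReal (hv : v ≠ 0) (t : ℝ) :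
    ∫ x, Real.exp (t * x) ∂(gaussianReal μ0 v) = Real.exp (t * μ0 + v * t ^ 2 / 2) := by
  rw [my_integral_gaussianReal hv]
  simp_rw [gaussianPDFReal_mul_exp hv t]
  rw [integral_const_mul, integral_gaussianPDFReal_eq_one _ hv, mul_one]

lemma my_lintegral_exp_gaussianReal (hv : v ≠ 0) (t : ℝ) :
    ∫⁻ x, ENNReal.ofReal (Real.exp (t * x)) ∂(gaussianReal μ0 v)
      = ENNReal.ofReal (Real.exp (t * μ0 + v * t ^ 2 / 2)) := by
  rw [← ofReal_integral_eq_lintegral_ofReal (my_integrable_exp_gaussianReal hv t)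
    (ae_of_all _ fun x => (Real.exp_nonneg _)), my_integral_exp_gaussianReal hv t]

lemma my_integrable_sq_gaussianReal (hv : v ≠ 0) (m : ℝ) :
    Integrable (fun x => (x - m) ^ 2) (gaussianReal μ0 v) := by
  have h1 : Integrable (fun x => Real.exp (x - m)) (gaussianReal μ0 v) := by
    have := (my_integrable_exp_gaussianReal (μ0 := μ0) hv 1).const_mul (Real.exp (-m))
    refine this.congr (ae_of_all _ fun x => ?_)
    simp only [← Real.exp_add]; ring_nf
  have h2 : Integrable (fun x => Real.exp (m - x)) (gaussianReal μ0 v) := by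
    have := (my_integrable_exp_gaussianReal (μ0 := μ0) hv (-1)).const_mul (Real.exp m)
    refine this.congr (ae_of_all _ fun x => ?_)
    simp only [← Real.exp_add]; ring_nf
  refine Integrable.mono' ((h1.const_mul 4).add (h2.const_mul 4))
    (((measurable_id.sub_const m).pow_const 2).aestronglyMeasurable)
    (ae_of_all _ fun x => ?_)
  rw [Real.norm_eq_abs, abs_of_nonneg (sq_nonneg _)]
  have := my_sq_le_exp_add_exp (x - m)
  simpa [neg_sub] using this

lemma gibbs_bound {rm pm : Measure (ℝ × ℝ)} [IsProbabilityMeasure rm] [IsProbabilityMeasure pm]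
    (hac : pm ≪ rm) (hlog : Integrable (fun p => Real.log (pm.rnDeriv rm p).toReal) pm)
    {g : ℝ × ℝ → ℝ} (hgmeas : Measurable g) (hgint : Integrable g pm)
    (hexp : ∫⁻ p, ENNReal.ofReal (Real.exp (g p)) ∂rm = 1) :
    ∫ p, g p ∂pm ≤ ∫ p, Real.log (pm.rnDeriv rm p).toReal ∂pm := by
  set r : ℝ × ℝ → ℝ≥0 := fun p => (pm.rnDeriv rm p).toNNReal with hrdef
  have hrmeas : Measurable r := (Measure.measurable_rnDeriv pm rm).ennreal_toNNReal
  have hpm : rm.withDensity (fun p => (r p : ℝ≥0∞)) = pm := by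
    rw [← Measure.withDensity_rnDeriv_eq pm rm hac]
    apply withDensity_congr_ae
    filter_upwards [Measure.rnDeriv_lt_top pm rm] with p hp
    exact ENNReal.coe_toNNReal hp.ne
  have hint_iff : ∀ f : ℝ × ℝ → ℝ, Integrable f pm ↔
      Integrable (fun p => (r p : ℝ) * f p) rm := by
    intro f
    rw [← hpm, integrable_withDensity_iff_integrable_smul hrmeas]
    simp_rw [NNReal.smul_def, smul_eq_mul]
  have hint_eq : ∀ f : ℝ × ℝ → ℝ, ∫ p, f p ∂pm = ∫ p, (r p : ℝ) * f p ∂rm := by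
    intro f
    rw [← hpm, integral_withDensity_eq_integral_smul hrmeas]
    simp_rw [NNReal.smul_def, smul_eq_mul]
  have hlog' : (fun p => Real.log (pm.rnDeriv rm p).toReal)
      = fun p => Real.log ((r p : ℝ)) := rfl
  have hone : Integrable (fun p => (r p : ℝ)) rm := by
    have := (hint_iff (fun _ => (1 : ℝ))).1 (integrable_const 1)
    simpa using this
  have hone_eq : ∫ p, (r p : ℝ) ∂rm = 1 := by
    have h := hint_eq (fun _ => (1 : ℝ))
    simpa using h.symm
  have hexp_int : Integrable (fun p => Real.exp (g p)) rm := by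
    refine ⟨hgmeas.exp.aestronglyMeasurable, ?_⟩
    rw [hasFiniteIntegral_iff_ofReal (ae_of_all _ fun p => Real.exp_nonneg _), hexp]
    exact ENNReal.one_lt_top
  have hexp_eq : ∫ p, Real.exp (g p) ∂rm = 1 := by
    rw [integral_eq_lintegral_of_nonneg_ae (ae_of_all _ fun p => Real.exp_nonneg _)
      hgmeas.exp.aestronglyMeasurable, hexp]
    simp
  have i1 : Integrable (fun p => (r p : ℝ) * Real.log ((r p : ℝ))) rm := by
    rw [hlog'] at hlog; exact (hint_iff _).1 hlog
  have i2 : Integrable (fun p => (r p : ℝ) * g p) rm := (hint_iff g).1 hgint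
  have key : 0 ≤ ∫ p, ((r p : ℝ) * Real.log ((r p : ℝ)) - (r p : ℝ) * g p
      - (r p : ℝ) + Real.exp (g p)) ∂rm := by
    refine integral_nonneg fun p => ?_
    have := young_ineq ((r p : ℝ)) (g p) (r p).2
    simp only [Pi.zero_apply]
    linarith
  have j12 : Integrable (fun p => (r p : ℝ) * Real.log ((r p : ℝ))
      - (r p : ℝ) * g p) rm := i1.sub i2
  have j123 : Integrable (fun p => (r p : ℝ) * Real.log ((r p : ℝ))
      - (r p : ℝ) * g p - (r p : ℝ)) rm := j12.sub hone
  have d1 : ∫ p, ((r p : ℝ) * Real.log ((r p : ℝ)) - (r p : ℝ) * g p) ∂rm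
      = (∫ p, (r p : ℝ) * Real.log ((r p : ℝ)) ∂rm) - ∫ p, (r p : ℝ) * g p ∂rm :=
    integral_sub i1 i2
  have d2 : ∫ p, ((r p : ℝ) * Real.log ((r p : ℝ)) - (r p : ℝ) * g p - (r p : ℝ)) ∂rm
      = (∫ p, ((r p : ℝ) * Real.log ((r p : ℝ)) - (r p : ℝ) * g p) ∂rm)
        - ∫ p, (r p : ℝ) ∂rm := integral_sub j12 hone
  have d3 : ∫ p, ((r p : ℝ) * Real.log ((r p : ℝ)) - (r p : ℝ) * g p - (r p : ℝ)
        + Real.exp (g p)) ∂rm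
      = (∫ p, ((r p : ℝ) * Real.log ((r p : ℝ)) - (r p : ℝ) * g p - (r p : ℝ)) ∂rm)
        + ∫ p, Real.exp (g p) ∂rm := integral_add j123 hexp_int
  rw [d3, d2, d1, hexp_eq, hone_eq] at key
  have e1 : ∫ p, g p ∂pm = ∫ p, (r p : ℝ) * g p ∂rm := hint_eq g
  have e2 : ∫ p, Real.log (pm.rnDeriv rm p).toReal ∂pm
      = ∫ p, (r p : ℝ) * Real.log ((r p : ℝ)) ∂rm := by
    rw [hlog']; exact hint_eq _
  rw [e1, e2]
  linarith

lemma my_integrable_quadratic {α : Measure ℝ} (c1 c2 m : ℝ)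
    (hy1 : Integrable (fun y : ℝ => y) α) (hy2 : Integrable (fun y : ℝ => y ^ 2) α)
    [IsFiniteMeasure α] :
    Integrable (fun y : ℝ => c1 * (y - m) ^ 2 - c2 * (y - m)) α := by
  have h : Integrable (fun y : ℝ => (c1 * (y ^ 2) + (-2 * c1 * m - c2) * y)
      + (c1 * m ^ 2 + c2 * m)) α :=
    ((hy2.const_mul c1).add (hy1.const_mul _)).add (integrable_const _)
  refine h.congr (ae_of_all _ fun y => ?_)
  ring

end Aux

/-! ### Main bounds on `OTe` -/

section Bounds

open Real
open scoped NNReal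

lemma OTe_upper (ε m μ0 : ℝ) {v : ℝ≥0} (hv : v ≠ 0) :
    OTe ε (gaussianReal μ0 v) (Measure.dirac m)
      ≤ ((∫ x, (x - m) ^ 2 ∂(gaussianReal μ0 v) : ℝ) : EReal) := by
  set G := gaussianReal μ0 v with hG
  set pm0 := G.prod (Measure.dirac m) with hpm0
  have h1 : IsProbabilityMeasure pm0 := by infer_instance
  have hcost_meas : Measurable (fun p : ℝ × ℝ => ENNReal.ofReal ((p.1 - p.2) ^ 2)) :=
    ((measurable_fst.sub measurable_snd).pow_const 2).ennreal_ofReal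
  have hU0 : (0:ℝ) ≤ ∫ x, (x - m) ^ 2 ∂G := integral_nonneg fun x => sq_nonneg _
  have hcost : ∫⁻ p, ENNReal.ofReal ((p.1 - p.2) ^ 2) ∂pm0
      = ENNReal.ofReal (∫ x, (x - m) ^ 2 ∂G) := by
    rw [hpm0, lintegral_prod _ hcost_meas.aemeasurable]
    simp only [lintegral_dirac]
    rw [← ofReal_integral_eq_lintegral_ofReal (my_integrable_sq_gaussianReal hv m)
      (ae_of_all _ fun x => sq_nonneg _)]
  have hKL : KLdiv pm0 pm0 = ((0 : ℝ) : EReal) := by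
    have hca : pm0 ≪ pm0 := Measure.AbsolutelyContinuous.rfl
    have hae : (fun p => Real.log (pm0.rnDeriv pm0 p).toReal) =ᵐ[pm0] fun _ => (0 : ℝ) := by
      filter_upwards [Measure.rnDeriv_self pm0] with p hp
      rw [hp]; simp
    have hint : Integrable (fun p => Real.log (pm0.rnDeriv pm0 p).toReal) pm0 :=
      (integrable_const (0 : ℝ)).congr hae.symm
    rw [KLdiv, if_pos ⟨hca, hint⟩, integral_congr_ae hae]
    simp
  refine le_trans (iInf_le _ pm0) (le_trans (iInf_le _ h1) (le_trans (iInf_le _ ?_)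
    (le_trans (iInf_le _ ?_) ?_)))
  · rw [hpm0]; exact Measure.fst_prod
  · rw [hpm0]; exact Measure.snd_prod
  · rw [hcost, hKL]
    have h2 : ((ENNReal.ofReal (∫ x, (x - m) ^ 2 ∂G) : ℝ≥0∞) : EReal)
        = ((∫ x, (x - m) ^ 2 ∂G : ℝ) : EReal) := by
      rw [EReal.coe_ennreal_ofReal, max_eq_left hU0]
    rw [h2]
    have h3 : (ε : EReal) * ((0 : ℝ) : EReal) = ((ε * 0 : ℝ) : EReal) :=
      (EReal.coe_mul ε 0).symm
    rw [h3, mul_zero]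
    simp

lemma OTe_lower (ε m μ0 : ℝ) (hε : 0 < ε) {v : ℝ≥0} (hv : v ≠ 0)
    (α : Measure ℝ) [IsProbabilityMeasure α]
    (hy1 : Integrable (fun y : ℝ => y) α) (hy2 : Integrable (fun y : ℝ => y ^ 2) α) :
    (((∫ x, (x - m) ^ 2 ∂(gaussianReal μ0 v))
      + ∫ y, ((1 - 2 * (v : ℝ) / ε) * (y - m) ^ 2 - 2 * (μ0 - m) * (y - m)) ∂α : ℝ) : EReal)
      ≤ OTe ε (gaussianReal μ0 v) α := by
  set G := gaussianReal μ0 v with hG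
  set φ : ℝ → ℝ := fun y => (1 - 2 * (v : ℝ) / ε) * (y - m) ^ 2 - 2 * (μ0 - m) * (y - m)
    with hφdef
  set gfun : ℝ × ℝ → ℝ := fun p => ((p.1 - m) ^ 2 + φ p.2 - (p.1 - p.2) ^ 2) / ε with hgdef
  have hφmeas : Measurable φ := by
    apply Measurable.sub
    · exact (((measurable_id.sub_const m).pow_const 2).const_mul _)
    · exact ((measurable_id.sub_const m).const_mul _)
  have hgmeas : Measurable gfun := by
    apply Measurable.div_const
    apply Measurable.sub
    · exact (((measurable_fst.sub_const m).pow_const 2).add (hφmeas.comp measurable_snd))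
    · exact ((measurable_fst.sub measurable_snd).pow_const 2)
  have hεne : ε ≠ 0 := hε.ne'
  -- the Gibbs exponential integrates to 1
  have hexp1 : ∫⁻ p, ENNReal.ofReal (Real.exp (gfun p)) ∂(G.prod α) = 1 := by
    rw [lintegral_prod_symm _ (hgmeas.exp.ennreal_ofReal).aemeasurable]
    have inner : ∀ y : ℝ, ∫⁻ x, ENNReal.ofReal (Real.exp (gfun (x, y))) ∂G = 1 := by
      intro y
      have hrw : ∀ x : ℝ, Real.exp (gfun (x, y))
          = Real.exp ((φ y + m ^ 2 - y ^ 2) / ε) * Real.exp ((2 * (y - m) / ε) * x) := by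
        intro x
        rw [← Real.exp_add]
        congr 1
        simp only [hgdef]
        field_simp
        ring
      calc ∫⁻ x, ENNReal.ofReal (Real.exp (gfun (x, y))) ∂G
          = ∫⁻ x, ENNReal.ofReal (Real.exp ((φ y + m ^ 2 - y ^ 2) / ε))
              * ENNReal.ofReal (Real.exp ((2 * (y - m) / ε) * x)) ∂G := by
            apply lintegral_congr
            intro x
            rw [hrw x, ENNReal.ofReal_mul (Real.exp_nonneg _)]
        _ = ENNReal.ofReal (Real.exp ((φ y + m ^ 2 - y ^ 2) / ε))
              * ∫⁻ x, ENNReal.ofReal (Real.exp ((2 * (y - m) / ε) * x)) ∂G :=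
            lintegral_const_mul _ ((measurable_id.const_mul _).exp.ennreal_ofReal)
        _ = ENNReal.ofReal (Real.exp ((φ y + m ^ 2 - y ^ 2) / ε))
              * ENNReal.ofReal (Real.exp ((2 * (y - m) / ε) * μ0
                + v * (2 * (y - m) / ε) ^ 2 / 2)) := by
            rw [my_lintegral_exp_gaussianReal hv]
        _ = ENNReal.ofReal (Real.exp (((φ y + m ^ 2 - y ^ 2) / ε)
              + ((2 * (y - m) / ε) * μ0 + v * (2 * (y - m) / ε) ^ 2 / 2))) := by
            rw [← ENNReal.ofReal_mul (Real.exp_nonneg _), ← Real.exp_add]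
        _ = 1 := by
            have hzero : ((φ y + m ^ 2 - y ^ 2) / ε)
                + ((2 * (y - m) / ε) * μ0 + v * (2 * (y - m) / ε) ^ 2 / 2) = 0 := by
              simp only [hφdef]
              field_simp
              ring
            rw [hzero, Real.exp_zero, ENNReal.ofReal_one]
    calc ∫⁻ y, ∫⁻ x, ENNReal.ofReal (Real.exp (gfun (x, y))) ∂G ∂α
        = ∫⁻ _, 1 ∂α := lintegral_congr inner
      _ = 1 := by simp
  refine le_iInf fun pm => le_iInf fun hprob => le_iInf fun hfst => le_iInf fun hsnd => ?_
  haveI := hprob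
  by_cases hKL : pm ≪ G.prod α
      ∧ Integrable (fun p => Real.log (pm.rnDeriv (G.prod α) p).toReal) pm
  · obtain ⟨hac, hlog⟩ := hKL
    rw [KLdiv, if_pos ⟨hac, hlog⟩]
    set D : ℝ := ∫ p, Real.log (pm.rnDeriv (G.prod α) p).toReal ∂pm with hD
    by_cases hC : (∫⁻ p, ENNReal.ofReal ((p.1 - p.2) ^ 2) ∂pm) = ⊤
    · rw [hC]
      rw [show ((⊤ : ℝ≥0∞) : EReal) = (⊤ : EReal) from EReal.coe_ennreal_top]
      rw [show (ε : EReal) * ((D : ℝ) : EReal) = ((ε * D : ℝ) : EReal) from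
        (EReal.coe_mul ε D).symm]
      rw [EReal.top_add_coe]
      exact le_top
    · -- the finite case
      have hcost_int : Integrable (fun p : ℝ × ℝ => (p.1 - p.2) ^ 2) pm := by
        refine ⟨((measurable_fst.sub measurable_snd).pow_const 2).aestronglyMeasurable, ?_⟩
        rw [hasFiniteIntegral_iff_ofReal (ae_of_all _ fun p => sq_nonneg _)]
        exact lt_top_iff_ne_top.2 hC
      have hcost_val : ∫ p, (p.1 - p.2) ^ 2 ∂pm
          = (∫⁻ p, ENNReal.ofReal ((p.1 - p.2) ^ 2) ∂pm).toReal := by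
        rw [integral_eq_lintegral_of_nonneg_ae (f := fun p : ℝ × ℝ => (p.1 - p.2) ^ 2) (ae_of_all _ fun p => sq_nonneg _)
          ((measurable_fst.sub measurable_snd).pow_const 2).aestronglyMeasurable]
      have hψG : Integrable (fun x : ℝ => (x - m) ^ 2) G := my_integrable_sq_gaussianReal hv m
      have hmap1 : pm.map Prod.fst = G := hfst
      have hmap2 : pm.map Prod.snd = α := hsnd
      have hψpm : Integrable (fun p : ℝ × ℝ => (p.1 - m) ^ 2) pm := by
        have := (integrable_map_measure
          (g := fun x : ℝ => (x - m) ^ 2)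
          (by rw [hmap1]; exact hψG.aestronglyMeasurable)
          measurable_fst.aemeasurable).1 (by rw [hmap1]; exact hψG)
        exact this
      have hψeq : ∫ x, (x - m) ^ 2 ∂G = ∫ p, (p.1 - m) ^ 2 ∂pm := by
        rw [← hmap1, integral_map measurable_fst.aemeasurable
          (by rw [hmap1]; exact hψG.aestronglyMeasurable)]
      have hφα : Integrable φ α := my_integrable_quadratic _ _ _ hy1 hy2
      have hφpm : Integrable (fun p : ℝ × ℝ => φ p.2) pm := by
        have := (integrable_map_measure
          (g := φ)
          (by rw [hmap2]; exact hφα.aestronglyMeasurable)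
          measurable_snd.aemeasurable).1 (by rw [hmap2]; exact hφα)
        exact this
      have hφeq : ∫ y, φ y ∂α = ∫ p, φ p.2 ∂pm := by
        rw [← hmap2, integral_map measurable_snd.aemeasurable
          (by rw [hmap2]; exact hφα.aestronglyMeasurable)]
      have hgint : Integrable gfun pm := by
        have := ((hψpm.add hφpm).sub hcost_int).div_const ε
        refine this.congr (ae_of_all _ fun p => rfl)
      have hDlb := gibbs_bound hac hlog hgmeas hgint hexp1
      have hgval : ∫ p, gfun p ∂pm
          = ((∫ x, (x - m) ^ 2 ∂G) + (∫ y, φ y ∂α)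
            - (∫⁻ p, ENNReal.ofReal ((p.1 - p.2) ^ 2) ∂pm).toReal) / ε := by
        have h1 : ∫ p, gfun p ∂pm
            = (∫ p, ((p.1 - m) ^ 2 + φ p.2 - (p.1 - p.2) ^ 2) ∂pm) / ε := by
          simp only [hgdef]
          rw [integral_div]
        have j : Integrable (fun p : ℝ × ℝ => (p.1 - m) ^ 2 + φ p.2) pm := hψpm.add hφpm
        have dA : ∫ p, ((p.1 - m) ^ 2 + φ p.2) ∂pm
            = (∫ p, (p.1 - m) ^ 2 ∂pm) + ∫ p, φ p.2 ∂pm := integral_add hψpm hφpm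
        have dB : ∫ p, ((p.1 - m) ^ 2 + φ p.2 - (p.1 - p.2) ^ 2) ∂pm
            = (∫ p, ((p.1 - m) ^ 2 + φ p.2) ∂pm) - ∫ p, (p.1 - p.2) ^ 2 ∂pm :=
          integral_sub j hcost_int
        rw [h1, dB, dA, ← hψeq, ← hφeq, hcost_val]
      -- pass to reals
      have hCr : ((∫⁻ p, ENNReal.ofReal ((p.1 - p.2) ^ 2) ∂pm : ℝ≥0∞) : EReal)
          = (((∫⁻ p, ENNReal.ofReal ((p.1 - p.2) ^ 2) ∂pm).toReal : ℝ) : EReal) := by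
        conv_lhs => rw [← ENNReal.ofReal_toReal hC]
        rw [EReal.coe_ennreal_ofReal, max_eq_left ENNReal.toReal_nonneg]
      rw [hCr, show (ε : EReal) * ((D : ℝ) : EReal) = ((ε * D : ℝ) : EReal) from
        (EReal.coe_mul ε D).symm, ← EReal.coe_add, EReal.coe_le_coe_iff]
      have hmul : ε * (∫ p, gfun p ∂pm) ≤ ε * D :=
        mul_le_mul_of_nonneg_left hDlb hε.le
      rw [hgval] at hmul
      rw [mul_div_cancel₀ _ hεne] at hmul
      linarith
  · rw [KLdiv, if_neg hKL]
    rw [EReal.coe_mul_top_of_pos hε, EReal.add_top_of_ne_bot (EReal.coe_ennreal_ne_bot _)]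
    exact le_top

lemma ereal_coe_finset_sum {ι : Type*} (s : Finset ι) (f : ι → ℝ) :
    ((∑ k ∈ s, f k : ℝ) : EReal) = ∑ k ∈ s, ((f k : ℝ) : EReal) := by
  induction s using Finset.cons_induction with
  | empty => simp
  | cons a s ha ih => rw [Finset.sum_cons, Finset.sum_cons, EReal.coe_add, ih]

lemma ereal_mul_le {c u : ℝ} (hc : 0 < c) {x : EReal} (h : x ≤ ((u : ℝ) : EReal)) :
    (c : EReal) * x ≤ ((c * u : ℝ) : EReal) := by
  induction x with
  | bot => rw [EReal.coe_mul_bot_of_pos hc]; exact bot_le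
  | coe x =>
      rw [← EReal.coe_mul, EReal.coe_le_coe_iff]
      exact mul_le_mul_of_nonneg_left (EReal.coe_le_coe_iff.1 h) hc.le
  | top => exact absurd h (by simp)

lemma ereal_le_mul {c u : ℝ} (hc : 0 < c) {x : EReal} (h : ((u : ℝ) : EReal) ≤ x) :
    ((c * u : ℝ) : EReal) ≤ (c : EReal) * x := by
  induction x with
  | bot => exact absurd h (by simp)
  | coe x =>
      rw [← EReal.coe_mul, EReal.coe_le_coe_iff]
      exact mul_le_mul_of_nonneg_left (EReal.coe_le_coe_iff.1 h) hc.le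
  | top => rw [EReal.coe_mul_top_of_pos hc]; exact le_top

end Bounds

/-- shrinking bias of `OT_ε^⊗`, degenerate case: with `ε = 2ε'²`,
Gaussians `α_k = N(μ_k, σ_k²)`, positive weights summing to 1, `μ̄ = Σ w_k μ_k`,
`σ̄ = Σ w_k σ_k²`, if `ε'² ≥ σ̄` then the Dirac measure at `μ̄` minimizes
`α ↦ Σ_k w_k OT_ε(α_k, α)` over sub-Gaussian probability measures. -/
theorem ot_product_gaussian_barycenter_dirac
    (ε' ε : ℝ) (hε' : 0 < ε') (hε : ε = 2 * ε' ^ 2)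
    (K : ℕ) (hK : 1 ≤ K) (w μ σ : Fin K → ℝ)
    (hw : ∀ k, 0 < w k) (hwsum : ∑ k, w k = 1) (hσ : ∀ k, 0 < σ k)
    (μbar σbar : ℝ) (hμbar : μbar = ∑ k, w k * μ k) (hσbar : σbar = ∑ k, w k * σ k ^ 2)
    (hbig : ε' ^ 2 ≥ σbar) :
    ∀ α : Measure ℝ, IsProbabilityMeasure α → SubGaussian α →
      ∑ k, ((w k : ℝ) : EReal) *
          OTe ε (gaussianReal (μ k) ((σ k ^ 2).toNNReal)) (Measure.dirac μbar)
        ≤ ∑ k, ((w k : ℝ) : EReal) *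
          OTe ε (gaussianReal (μ k) ((σ k ^ 2).toNNReal)) α := by
  intro α hprobα hsub
  haveI := hprobα
  obtain ⟨q, hq, hqfin⟩ := hsub
  have hεpos : 0 < ε := by rw [hε]; positivity
  -- integrability under α
  have hexpα : Integrable (fun y : ℝ => Real.exp (y ^ 2 / q)) α := by
    refine ⟨(((measurable_id.pow_const 2).div_const q).exp).aestronglyMeasurable, ?_⟩
    rw [hasFiniteIntegral_iff_ofReal (ae_of_all _ fun y => Real.exp_nonneg _)]
    exact hqfin
  have hy2 : Integrable (fun y : ℝ => y ^ 2) α := by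
    refine Integrable.mono' (hexpα.const_mul q)
      ((measurable_id.pow_const 2).aestronglyMeasurable) (ae_of_all _ fun y => ?_)
    rw [Real.norm_eq_abs, abs_of_nonneg (sq_nonneg _)]
    have h1 := Real.add_one_le_exp (y ^ 2 / q)
    have h3 : y ^ 2 / q ≤ Real.exp (y ^ 2 / q) := by linarith
    have h4 : y ^ 2 = q * (y ^ 2 / q) := by field_simp
    conv_lhs => rw [h4]
    exact mul_le_mul_of_nonneg_left h3 hq.le
  have hy1 : Integrable (fun y : ℝ => y) α := by
    refine Integrable.mono' ((integrable_const (1:ℝ)).add hy2)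
      measurable_id.aestronglyMeasurable (ae_of_all _ fun y => ?_)
    rw [Real.norm_eq_abs]
    exact my_abs_le_one_add_sq y
  -- per-k data
  have hv : ∀ k, (σ k ^ 2).toNNReal ≠ 0 := fun k => by
    simp only [ne_eq, Real.toNNReal_eq_zero, not_le]
    exact pow_pos (hσ k) 2
  have hvco : ∀ k : Fin K, ((σ k ^ 2).toNNReal : ℝ) = σ k ^ 2 := fun k =>
    Real.coe_toNNReal _ (sq_nonneg _)
  set U : Fin K → ℝ := fun k =>
    ∫ x, (x - μbar) ^ 2 ∂(gaussianReal (μ k) ((σ k ^ 2).toNNReal)) with hU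
  set Φ : Fin K → ℝ := fun k =>
    ∫ y, ((1 - 2 * ((σ k ^ 2).toNNReal : ℝ) / ε) * (y - μbar) ^ 2
      - 2 * (μ k - μbar) * (y - μbar)) ∂α with hΦ
  have hφint : ∀ k : Fin K, Integrable (fun y : ℝ =>
      (1 - 2 * ((σ k ^ 2).toNNReal : ℝ) / ε) * (y - μbar) ^ 2
        - 2 * (μ k - μbar) * (y - μbar)) α :=
    fun k => my_integrable_quadratic _ _ _ hy1 hy2
  -- key positivity: ∑ w_k Φ_k ≥ 0
  have hsumΦ : 0 ≤ ∑ k, w k * Φ k := by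
    have hstep : ∑ k, w k * Φ k = ∫ y, (1 - 2 * σbar / ε) * (y - μbar) ^ 2 ∂α := by
      have h1 : ∀ k : Fin K, w k * Φ k = ∫ y, w k *
          ((1 - 2 * ((σ k ^ 2).toNNReal : ℝ) / ε) * (y - μbar) ^ 2
            - 2 * (μ k - μbar) * (y - μbar)) ∂α := fun k => (integral_const_mul _ _).symm
      rw [Finset.sum_congr rfl fun k _ => h1 k,
        ← integral_finset_sum _ (fun k _ => (hφint k).const_mul (w k))]
      apply integral_congr_ae
      refine ae_of_all _ fun y => ?_
      simp only [hvco]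
      have expand : ∀ k : Fin K, w k * ((1 - 2 * σ k ^ 2 / ε) * (y - μbar) ^ 2
            - 2 * (μ k - μbar) * (y - μbar))
          = ((y - μbar) ^ 2 + 2 * μbar * (y - μbar)) * w k
            - (2 / ε * (y - μbar) ^ 2) * (w k * σ k ^ 2)
            - (2 * (y - μbar)) * (w k * μ k) := fun k => by field_simp; ring
      rw [Finset.sum_congr rfl fun k _ => expand k]
      rw [Finset.sum_sub_distrib, Finset.sum_sub_distrib,
        ← Finset.mul_sum, ← Finset.mul_sum, ← Finset.mul_sum, hwsum, ← hσbar, ← hμbar]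
      ring
    rw [hstep]
    refine integral_nonneg fun y => ?_
    have hco : 0 ≤ 1 - 2 * σbar / ε := by
      rw [hε]
      have h2 : 2 * σbar / (2 * ε' ^ 2) = σbar / ε' ^ 2 := by
        field_simp
      rw [h2]
      have h3 : σbar / ε' ^ 2 ≤ 1 := by
        rw [div_le_one (by positivity)]
        exact hbig
      linarith
    exact mul_nonneg hco (sq_nonneg _)
  -- assemble
  calc ∑ k, ((w k : ℝ) : EReal) *
        OTe ε (gaussianReal (μ k) ((σ k ^ 2).toNNReal)) (Measure.dirac μbar)
      ≤ ∑ k, ((w k * U k : ℝ) : EReal) := by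
        refine Finset.sum_le_sum fun k _ => ?_
        exact ereal_mul_le (hw k) (OTe_upper ε μbar (μ k) (hv k))
    _ = ((∑ k, w k * U k : ℝ) : EReal) := (ereal_coe_finset_sum _ _).symm
    _ ≤ ((∑ k, w k * (U k + Φ k) : ℝ) : EReal) := by
        rw [EReal.coe_le_coe_iff]
        have : ∑ k, w k * (U k + Φ k) = (∑ k, w k * U k) + ∑ k, w k * Φ k := by
          rw [← Finset.sum_add_distrib]
          exact Finset.sum_congr rfl fun k _ => by ring
        rw [this]
        linarith
    _ = ∑ k, ((w k * (U k + Φ k) : ℝ) : EReal) := ereal_coe_finset_sum _ _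
    _ ≤ ∑ k, ((w k : ℝ) : EReal) *
          OTe ε (gaussianReal (μ k) ((σ k ^ 2).toNNReal)) α := by
        refine Finset.sum_le_sum fun k _ => ?_
        exact ereal_le_mul (hw k)
          (OTe_lower ε μbar (μ k) hεpos (hv k) α hy1 hy2)
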